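/- arXiv:2009.00808 — 3 statements merged into one kernel-verified Lean document; each statement's English description precedes it below -/
import Mathlib

section
/- Let {F_j}_{j ∈ J} be a family of subsets of a finite set F whose intersection graph is bipartite with parts A and B. Then the polytope {y ∈ [0,1]^F : y(F_j) = 1 for all j ∈ J} is a face of the intersection of the two partition matroid polytopes determined by {F_j : j ∈ A} and {F_j : j ∈ B}; consequently, if the sets within each part A (respectively B) are pairwise disjoint, every extreme point of this polytope is integral. -/
open Finset

private lemma sum_zero_one' {ι : Type*} (T : Finset ι) (y : ι → ℝ)
    (h : ∀ i ∈ T, y i = 0 ∨ y i = 1) : ∃ n : ℕ, ∑ i ∈ T, y i = n := by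
  classical
  refine ⟨(T.filter fun i => y i = 1).card, ?_⟩
  rw [← Finset.sum_filter_add_sum_filter_not T (fun i => y i = 1)]
  have h1 : ∑ i ∈ T.filter (fun i => y i = 1), y i
      = ((T.filter fun i => y i = 1).card : ℝ) := by
    rw [Finset.sum_congr rfl (fun i hi => (Finset.mem_filter.mp hi).2)]
    simp
  have h2 : ∑ i ∈ T.filter (fun i => ¬ y i = 1), y i = 0 := by
    apply Finset.sum_eq_zero
    intro i hi
    rcases h i (Finset.mem_filter.mp hi).1 with h0 | h1
    · exact h0
    · exact absurd h1 (Finset.mem_filter.mp hi).2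
  rw [h1, h2, add_zero]

/-- If {F_j}_{j∈A} are pairwise disjoint and {F_j}_{j∈B} are pairwise disjoint,
then every extreme point of the polytope
{y ∈ [0,1]^F : y(F_j) = 1 for all j ∈ A ∪ B} is integral. -/
theorem extreme_points_integral {ι κ : Type*} [Fintype ι] [DecidableEq κ]
    (A B : Finset κ) (Fj : κ → Finset ι)
    (hA : (A : Set κ).Pairwise fun j j' => Disjoint (Fj j) (Fj j'))
    (hB : (B : Set κ).Pairwise fun j j' => Disjoint (Fj j) (Fj j'))
    (y : ι → ℝ)
    (hy : y ∈ Set.extremePoints ℝ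
      {z : ι → ℝ | (∀ i, z i ∈ Set.Icc (0 : ℝ) 1) ∧
        ∀ j ∈ A ∪ B, ∑ i ∈ Fj j, z i = 1}) :
    ∀ i, y i = 0 ∨ y i = 1 := by
  classical
  by_contra hcon
  push_neg at hcon
  obtain ⟨i₀, hi₀0, hi₀1⟩ := hcon
  obtain ⟨hymem, hyext⟩ := hy
  obtain ⟨hybox, hysum⟩ := hymem
  set S : Finset ι := univ.filter (fun i => y i ≠ 0 ∧ y i ≠ 1) with hSdef
  have hi₀S : i₀ ∈ S := by simp [hSdef, hi₀0, hi₀1]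
  have hSne : S.Nonempty := ⟨i₀, hi₀S⟩
  have hSmem : ∀ i ∈ S, 0 < y i ∧ y i < 1 := by
    intro i hi
    simp only [hSdef, mem_filter, mem_univ, true_and] at hi
    obtain ⟨h0, h1⟩ := hi
    obtain ⟨hl, hr⟩ := hybox i
    exact ⟨lt_of_le_of_ne hl (Ne.symm h0), lt_of_le_of_ne hr h1⟩
  have hSnot : ∀ i, i ∉ S → y i = 0 ∨ y i = 1 := by
    intro i hi
    simp only [hSdef, mem_filter, mem_univ, true_and] at hi
    by_cases h0 : y i = 0
    · exact Or.inl h0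
    · exact Or.inr (by tauto)
  set R : Finset κ := (A ∪ B).filter (fun j => ((Fj j) ∩ S).Nonempty) with hRdef
  -- each relevant row has ≥ 2 fractional elements
  have hrow2 : ∀ j ∈ R, 2 ≤ ((Fj j) ∩ S).card := by
    intro j hj
    simp only [hRdef, mem_filter] at hj
    obtain ⟨hjAB, hne⟩ := hj
    by_contra hlt
    push_neg at hlt
    interval_cases h : ((Fj j) ∩ S).card
    · exact absurd (Finset.card_eq_zero.mp h) (Finset.nonempty_iff_ne_empty.mp hne)
    · obtain ⟨a, ha⟩ := Finset.card_eq_one.mp h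
      have haS : a ∈ (Fj j) ∩ S := ha ▸ mem_singleton_self a
      have haS' : a ∈ S := (mem_inter.mp haS).2
      obtain ⟨n, hn⟩ := sum_zero_one' ((Fj j) \ S) y
        (fun i hi => hSnot i (mem_sdiff.mp hi).2)
      have hsplit := Finset.sum_inter_add_sum_sdiff (Fj j) S y
      rw [hysum j hjAB] at hsplit
      rw [ha, Finset.sum_singleton, hn] at hsplit
      obtain ⟨ha0, ha1⟩ := hSmem a haS'
      have hn0 : (n : ℝ) < 1 := by linarith
      have : n = 0 := by exact_mod_cast Nat.lt_one_iff.mp (by exact_mod_cast hn0)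
      rw [this] at hsplit
      push_cast at hsplit
      linarith
  have hcolA : ∀ i, (A.filter fun j => i ∈ Fj j).card ≤ 1 := by
    intro i
    rw [Finset.card_le_one]
    intro a ha b hb
    simp only [mem_filter] at ha hb
    by_contra hne
    exact (Finset.disjoint_left.mp (hA ha.1 hb.1 hne) ha.2) hb.2
  have hcolB : ∀ i, (B.filter fun j => i ∈ Fj j).card ≤ 1 := by
    intro i
    rw [Finset.card_le_one]
    intro a ha b hb
    simp only [mem_filter] at ha hb
    by_contra hne
    exact (Finset.disjoint_left.mp (hB ha.1 hb.1 hne) ha.2) hb.2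
  have hPsub : ∀ i, (R.filter fun j => i ∈ Fj j)
      ⊆ (A.filter fun j => i ∈ Fj j) ∪ (B.filter fun j => i ∈ Fj j) := by
    intro i j hj
    simp only [hRdef, mem_filter, mem_union] at hj ⊢
    tauto
  have hcol : ∀ i, (R.filter fun j => i ∈ Fj j).card ≤ 2 := by
    intro i
    calc (R.filter fun j => i ∈ Fj j).card
        ≤ ((A.filter fun j => i ∈ Fj j) ∪ (B.filter fun j => i ∈ Fj j)).card :=
          Finset.card_le_card (hPsub i)
      _ ≤ (A.filter fun j => i ∈ Fj j).card + (B.filter fun j => i ∈ Fj j).card :=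
          Finset.card_union_le _ _
      _ ≤ 2 := by have := hcolA i; have := hcolB i; omega
  have hcount : ∑ j ∈ R, ((Fj j) ∩ S).card
      = ∑ i ∈ S, (R.filter fun j => i ∈ Fj j).card := by
    have step : ∀ j, ((Fj j) ∩ S).card = ∑ i ∈ S, if i ∈ Fj j then 1 else 0 := by
      intro j
      rw [Finset.sum_boole, Nat.cast_id, Finset.filter_mem_eq_inter, Finset.inter_comm]
    have step2 : ∀ i, (R.filter fun j => i ∈ Fj j).card
        = ∑ j ∈ R, if i ∈ Fj j then 1 else 0 := by
      intro i
      rw [Finset.sum_boole, Nat.cast_id]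
    simp only [step, step2]
    exact Finset.sum_comm
  have hRS : R.card ≤ S.card := by
    have h1 : 2 * R.card ≤ ∑ j ∈ R, ((Fj j) ∩ S).card := by
      calc 2 * R.card = ∑ _j ∈ R, 2 := by rw [Finset.sum_const, smul_eq_mul, mul_comm]
        _ ≤ _ := Finset.sum_le_sum hrow2
    have h2 : ∑ i ∈ S, (R.filter fun j => i ∈ Fj j).card ≤ 2 * S.card := by
      calc ∑ i ∈ S, (R.filter fun j => i ∈ Fj j).card
          ≤ ∑ _i ∈ S, 2 := Finset.sum_le_sum (fun i _ => hcol i)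
        _ = 2 * S.card := by rw [Finset.sum_const, smul_eq_mul, mul_comm]
    omega
  -- the linear map
  let T : (↥S → ℝ) →ₗ[ℝ] (↥R → ℝ) :=
  { toFun := fun v j => ∑ i : ↥S, if (i : ι) ∈ Fj (j : κ) then v i else 0
    map_add' := by
      intro v w
      funext j
      simp only [Pi.add_apply]
      rw [← Finset.sum_add_distrib]
      exact Finset.sum_congr rfl fun i _ => by split_ifs <;> ring
    map_smul' := by
      intro c v
      funext j
      simp only [Pi.smul_apply, RingHom.id_apply, smul_eq_mul]
      rw [Finset.mul_sum]
      exact Finset.sum_congr rfl fun i _ => by split_ifs <;> ring }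
  have hTapp : ∀ (v : ↥S → ℝ) (j : ↥R),
      T v j = ∑ i : ↥S, if (i : ι) ∈ Fj (j : κ) then v i else 0 := fun _ _ => rfl
  have hTnotinj : ¬ Function.Injective T := by
    intro hinj
    have hfr1 : S.card ≤ R.card := by
      have h1 := LinearMap.finrank_range_of_inj hinj
      have h2 : Module.finrank ℝ (LinearMap.range T) ≤ Module.finrank ℝ (↥R → ℝ) :=
        Submodule.finrank_le _
      rw [h1, Module.finrank_pi, Module.finrank_pi, Fintype.card_coe, Fintype.card_coe] at h2
      exact h2
    have hcards : R.card = S.card := le_antisymm hRS hfr1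
    -- tightness: every fractional element lies in exactly 2 relevant rows
    have hsum_ge : 2 * S.card ≤ ∑ i ∈ S, (R.filter fun j => i ∈ Fj j).card := by
      rw [← hcount]
      calc 2 * S.card = 2 * R.card := by rw [hcards]
        _ = ∑ _j ∈ R, 2 := by rw [Finset.sum_const, smul_eq_mul, mul_comm]
        _ ≤ _ := Finset.sum_le_sum hrow2
    have htight : ∀ i ∈ S, (R.filter fun j => i ∈ Fj j).card = 2 := by
      by_contra hnt
      push_neg at hnt
      obtain ⟨i₁, hi₁S, hi₁⟩ := hnt
      have hlt : ∑ i ∈ S, (R.filter fun j => i ∈ Fj j).card < ∑ _i ∈ S, 2 :=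
        Finset.sum_lt_sum (fun i _ => hcol i)
          ⟨i₁, hi₁S, lt_of_le_of_ne (hcol i₁) hi₁⟩
      rw [Finset.sum_const, smul_eq_mul] at hlt
      omega
    -- the signed functional kills every column
    have hsign : ∀ i ∈ S,
        ∑ j ∈ R.filter (fun j => i ∈ Fj j), (if j ∈ A then (1:ℝ) else -1) = 0 := by
      intro i hi
      set P := R.filter (fun j => i ∈ Fj j) with hP
      set Af := A.filter (fun j => i ∈ Fj j) with hAf
      set Bf := B.filter (fun j => i ∈ Fj j) with hBf
      have hPcard : P.card = 2 := htight i hi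
      have hsub : P ⊆ Af ∪ Bf := hPsub i
      have hunion2 : 2 ≤ (Af ∪ Bf).card := hPcard ▸ Finset.card_le_card hsub
      have hle : (Af ∪ Bf).card ≤ Af.card + Bf.card := Finset.card_union_le _ _
      have hAle : Af.card ≤ 1 := by rw [hAf]; exact hcolA i
      have hBle : Bf.card ≤ 1 := by rw [hBf]; exact hcolB i
      have hAf1 : Af.card = 1 := by omega
      have hBf1 : Bf.card = 1 := by omega
      have hPeq : P = Af ∪ Bf := Finset.eq_of_subset_of_card_le hsub (by omega)
      obtain ⟨jA, hjA⟩ := Finset.card_eq_one.mp hAf1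
      obtain ⟨jB, hjB⟩ := Finset.card_eq_one.mp hBf1
      have hne : jA ≠ jB := by
        rintro rfl
        rw [hPeq, hjA, hjB, Finset.union_idempotent] at hPcard
        simp at hPcard
      have hPpair : P = {jA, jB} := by
        rw [hPeq, hjA, hjB]
        rfl
      have hjAA : jA ∈ A := by
        have : jA ∈ Af := hjA ▸ mem_singleton_self jA
        exact (mem_filter.mp this).1
      have hjBnA : jB ∉ A := by
        intro hjBA
        have hjBmem : jB ∈ Bf := hjB ▸ mem_singleton_self jB
        have : jB ∈ Af := mem_filter.mpr ⟨hjBA, (mem_filter.mp hjBmem).2⟩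
        rw [hjA, mem_singleton] at this
        exact hne this.symm
      rw [hPpair, Finset.sum_pair hne, if_pos hjAA, if_neg hjBnA]
      ring
    let L : (↥R → ℝ) →ₗ[ℝ] ℝ :=
    { toFun := fun w => ∑ j : ↥R, (if (j : κ) ∈ A then (1:ℝ) else -1) * w j
      map_add' := by
        intro v w
        simp only [Pi.add_apply]
        rw [← Finset.sum_add_distrib]
        exact Finset.sum_congr rfl fun j _ => by ring
      map_smul' := by
        intro c v
        simp only [Pi.smul_apply, RingHom.id_apply, smul_eq_mul]
        rw [Finset.mul_sum]
        exact Finset.sum_congr rfl fun j _ => by ring }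
    have hLT : L.comp T = 0 := by
      apply LinearMap.ext
      intro v
      show ∑ j : ↥R, (if (j : κ) ∈ A then (1:ℝ) else -1)
          * (∑ i : ↥S, if (i : ι) ∈ Fj (j : κ) then v i else 0) = 0
      have hswap : ∑ j : ↥R, (if (j : κ) ∈ A then (1:ℝ) else -1)
          * (∑ i : ↥S, if (i : ι) ∈ Fj (j : κ) then v i else 0)
          = ∑ i : ↥S, ∑ j : ↥R,
            (if (j : κ) ∈ A then (1:ℝ) else -1) * (if (i : ι) ∈ Fj (j : κ) then v i else 0) := by
        rw [Finset.sum_comm]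
        congr 1
        funext j
        rw [Finset.mul_sum]
      rw [hswap]
      apply Finset.sum_eq_zero
      intro i _
      have hinner : (∑ j : ↥R, (if (j : κ) ∈ A then (1:ℝ) else -1)
            * (if (i : ι) ∈ Fj (j : κ) then v i else 0))
          = (∑ j ∈ R.filter (fun j => (i : ι) ∈ Fj j), (if j ∈ A then (1:ℝ) else -1)) * v i := by
        calc (∑ j : ↥R, (if (j : κ) ∈ A then (1:ℝ) else -1)
              * (if (i : ι) ∈ Fj (j : κ) then v i else 0))
            = ∑ j ∈ R, (if j ∈ A then (1:ℝ) else -1) * (if (i : ι) ∈ Fj j then v i else 0) :=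
              Finset.sum_coe_sort R (fun j => (if j ∈ A then (1:ℝ) else -1)
                * (if (i : ι) ∈ Fj j then v i else 0))
          _ = ∑ j ∈ R, (if (i : ι) ∈ Fj j then (if j ∈ A then (1:ℝ) else -1) * v i else 0) :=
              Finset.sum_congr rfl fun j _ => by split_ifs <;> ring
          _ = ∑ j ∈ R.filter (fun j => (i : ι) ∈ Fj j), (if j ∈ A then (1:ℝ) else -1) * v i :=
              (Finset.sum_filter _ _).symm
          _ = (∑ j ∈ R.filter (fun j => (i : ι) ∈ Fj j), (if j ∈ A then (1:ℝ) else -1)) * v i :=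
              (Finset.sum_mul _ _ _).symm
      rw [hinner, hsign i i.2, zero_mul]
    have hrange : LinearMap.range T ≤ LinearMap.ker L := LinearMap.range_le_ker_iff.mpr hLT
    have hLne : LinearMap.ker L < ⊤ := by
      rw [lt_top_iff_ne_top]
      intro heq
      have hL0 : L = 0 := LinearMap.ker_eq_top.mp heq
      have hval : L (fun j => if (j : κ) ∈ A then (1:ℝ) else -1) = (R.card : ℝ) := by
        show (∑ j : ↥R, (if (j : κ) ∈ A then (1:ℝ) else -1)
            * (if (j : κ) ∈ A then (1:ℝ) else -1)) = (R.card : ℝ)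
        calc (∑ j : ↥R, (if (j : κ) ∈ A then (1:ℝ) else -1)
              * (if (j : κ) ∈ A then (1:ℝ) else -1))
            = ∑ _j : ↥R, (1:ℝ) := Finset.sum_congr rfl (fun j _ => by split_ifs <;> norm_num)
          _ = (R.card : ℝ) := by simp
      rw [hL0] at hval
      simp only [LinearMap.zero_apply] at hval
      have hR0 : R.card = 0 := by exact_mod_cast hval.symm
      have hS0 : S.card ≠ 0 := Finset.card_ne_zero_of_mem hi₀S
      omega
    have e1 : Module.finrank ℝ (LinearMap.range T) = S.card := by
      rw [LinearMap.finrank_range_of_inj hinj, Module.finrank_pi, Fintype.card_coe]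
    have e2 : Module.finrank ℝ (LinearMap.ker L) < R.card := by
      have h := Submodule.finrank_lt hLne.ne
      rwa [Module.finrank_pi, Fintype.card_coe] at h
    have e3 := Submodule.finrank_mono hrange
    omega
  have hkerne : LinearMap.ker T ≠ ⊥ := by
    intro h
    exact hTnotinj (LinearMap.ker_eq_bot.mp h)
  obtain ⟨d, hdker, hd0⟩ := (Submodule.ne_bot_iff _).mp hkerne
  have hdT : T d = 0 := hdker
  set d' : ι → ℝ := fun i => if h : i ∈ S then d ⟨i, h⟩ else 0 with hd'def
  have key : ∀ j : κ, ∑ i ∈ Fj j, d' i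
      = ∑ i : ↥S, if (i : ι) ∈ Fj j then d i else 0 := by
    intro j
    have l1 : ∑ i ∈ Fj j ∩ S, d' i = ∑ i ∈ Fj j, d' i := by
      apply Finset.sum_subset Finset.inter_subset_left
      intro x hx hnot
      exact dif_neg (fun hS => hnot (mem_inter.mpr ⟨hx, hS⟩))
    have l2 : ∑ i : ↥S, (if (i : ι) ∈ Fj j then d i else 0)
        = ∑ i ∈ S, (if i ∈ Fj j then d' i else 0) := by
      rw [← Finset.sum_coe_sort S (fun i => if i ∈ Fj j then d' i else 0)]
      apply Finset.sum_congr rfl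
      intro i _
      have hcoe : d' (i : ι) = d i := by simp [hd'def, i.2]
      rw [hcoe]
    have l3 : ∑ i ∈ S, (if i ∈ Fj j then d' i else 0) = ∑ i ∈ S ∩ Fj j, d' i := by
      rw [← Finset.sum_filter, Finset.filter_mem_eq_inter]
    rw [← l1, l2, l3, Finset.inter_comm]
  have hd'sum : ∀ j ∈ A ∪ B, ∑ i ∈ Fj j, d' i = 0 := by
    intro j hj
    rw [key j]
    by_cases hjR : j ∈ R
    · have h := congrFun hdT ⟨j, hjR⟩
      exact (hTapp d ⟨j, hjR⟩).symm.trans h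
    · apply Finset.sum_eq_zero
      intro i _
      rw [if_neg]
      intro hmem
      exact hjR (by rw [hRdef]; exact mem_filter.mpr ⟨hj, ⟨i, mem_inter.mpr ⟨hmem, i.2⟩⟩⟩)
  obtain ⟨i₁, hd'i₁⟩ : ∃ i, d' i ≠ 0 := by
    obtain ⟨i, hi⟩ := Function.ne_iff.mp hd0
    refine ⟨(i : ι), ?_⟩
    have hcoe : d' (i : ι) = d i := by simp [hd'def, i.2]
    rw [hcoe]
    simpa using hi
  set m := S.inf' hSne (fun i => min (y i) (1 - y i)) with hm
  have hmpos : 0 < m := by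
    rw [hm, Finset.lt_inf'_iff]
    intro i hi
    obtain ⟨h0, h1⟩ := hSmem i hi
    rw [lt_min_iff]
    constructor <;> linarith
  set M := S.sup' hSne (fun i => |d' i|) with hM
  have hM0 : 0 ≤ M := le_trans (abs_nonneg (d' i₀))
    (by rw [hM]; exact Finset.le_sup' (fun i => |d' i|) hi₀S)
  set ε := m / (M + 1) with hε
  have hεpos : 0 < ε := div_pos hmpos (by linarith)
  have hbound : ∀ i ∈ S, ε * |d' i| ≤ min (y i) (1 - y i) := by
    intro i hi
    have h1 : |d' i| ≤ M := by rw [hM]; exact Finset.le_sup' (fun i => |d' i|) hi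
    have h2 : m ≤ min (y i) (1 - y i) := by
      rw [hm]; exact Finset.inf'_le (fun i => min (y i) (1 - y i)) hi
    have h3 : ε * |d' i| ≤ ε * (M + 1) :=
      mul_le_mul_of_nonneg_left (by linarith) hεpos.le
    have h4 : ε * (M + 1) = m := by
      rw [hε]; field_simp
    linarith
  set x₁ : ι → ℝ := fun i => y i - ε * d' i with hx₁
  set x₂ : ι → ℝ := fun i => y i + ε * d' i with hx₂
  have hbox : ∀ i, (0 ≤ x₁ i ∧ x₁ i ≤ 1) ∧ (0 ≤ x₂ i ∧ x₂ i ≤ 1) := by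
    intro i
    by_cases hi : i ∈ S
    · have hb := hbound i hi
      have habs1 : ε * d' i ≤ ε * |d' i| :=
        mul_le_mul_of_nonneg_left (le_abs_self _) hεpos.le
      have habs2 : ε * (-(d' i)) ≤ ε * |d' i| :=
        mul_le_mul_of_nonneg_left (neg_le_abs _) hεpos.le
      obtain ⟨h0, h1⟩ := hSmem i hi
      have hmin1 : min (y i) (1 - y i) ≤ y i := min_le_left _ _
      have hmin2 : min (y i) (1 - y i) ≤ 1 - y i := min_le_right _ _
      simp only [hx₁, hx₂]
      refine ⟨⟨by nlinarith, by nlinarith⟩, ⟨by nlinarith, by nlinarith⟩⟩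
    · have hz : d' i = 0 := dif_neg hi
      obtain ⟨h0, h1⟩ := hybox i
      simp only [hx₁, hx₂, hz, mul_zero, sub_zero, add_zero]
      exact ⟨⟨h0, h1⟩, ⟨h0, h1⟩⟩
  have hx₁mem : x₁ ∈ {z : ι → ℝ | (∀ i, z i ∈ Set.Icc (0 : ℝ) 1) ∧
      ∀ j ∈ A ∪ B, ∑ i ∈ Fj j, z i = 1} := by
    constructor
    · intro i; exact ⟨(hbox i).1.1, (hbox i).1.2⟩
    · intro j hj
      simp only [hx₁]
      rw [Finset.sum_sub_distrib, hysum j hj, ← Finset.mul_sum, hd'sum j hj, mul_zero, sub_zero]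
  have hx₂mem : x₂ ∈ {z : ι → ℝ | (∀ i, z i ∈ Set.Icc (0 : ℝ) 1) ∧
      ∀ j ∈ A ∪ B, ∑ i ∈ Fj j, z i = 1} := by
    constructor
    · intro i; exact ⟨(hbox i).2.1, (hbox i).2.2⟩
    · intro j hj
      simp only [hx₂]
      rw [Finset.sum_add_distrib, hysum j hj, ← Finset.mul_sum, hd'sum j hj, mul_zero, add_zero]
  have hseg : y ∈ openSegment ℝ x₁ x₂ := by
    refine ⟨1/2, 1/2, by norm_num, by norm_num, by norm_num, ?_⟩
    funext i
    simp only [Pi.add_apply, Pi.smul_apply, smul_eq_mul, hx₁, hx₂]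
    ring
  have h2 : x₂ = y := hyext hx₂mem hx₁mem (by rwa [openSegment_symm] at hseg)
  have heq := congrFun h2 i₁
  simp only [hx₂] at heq
  have : ε * d' i₁ = 0 := by linarith
  exact hd'i₁ (by
    rcases mul_eq_zero.mp this with h | h
    · exact absurd h hεpos.ne'
    · exact h)
end

section
/- Suppose the sets {F_j}_{j ∈ A} are pairwise disjoint and {F_j}_{j ∈ B} are pairwise disjoint (A, B index sets over subsets of a finite set F), w ∈ ℝ_{≥0}^F, and there exists a fractional point ȳ ∈ [0,1]^F with ȳ(F_j) = 1 for all j ∈ A ∪ B and Σ_i w_i ȳ_i ≤ B₀. Then there exists an integral point ŷ ∈ {0,1}^F with ŷ(F_j) = 1 for all j ∈ A ∪ B and Σ_i w_i ŷ_i ≤ B₀. -/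
open Finset

lemma exists_kernel_vec {ι κ : Type*} [Fintype ι] [DecidableEq ι] [DecidableEq κ]
    (A B : Finset κ) (Fj : κ → Finset ι)
    (hA : (A : Set κ).Pairwise fun j j' => Disjoint (Fj j) (Fj j'))
    (hB : (B : Set κ).Pairwise fun j j' => Disjoint (Fj j) (Fj j'))
    (S : Finset ι) (hS : S.Nonempty)
    (h2 : ∀ j ∈ A ∪ B, (Fj j ∩ S).Nonempty → 2 ≤ (Fj j ∩ S).card) :
    ∃ d : ι → ℝ, (∃ i, d i ≠ 0) ∧ (∀ i ∉ S, d i = 0) ∧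
      ∀ j ∈ A ∪ B, ∑ i ∈ Fj j, d i = 0 := by
  classical
  set R : Finset κ := (A ∪ B).filter (fun j => (Fj j ∩ S).Nonempty) with hRdef
  have hdegA : ∀ i : ι, (A.filter (fun j => i ∈ Fj j)).card ≤ 1 := by
    intro i
    refine Finset.card_le_one.mpr ?_
    intro j hj j' hj'
    simp only [mem_filter] at hj hj'
    by_contra hne
    exact (Finset.disjoint_left.mp (hA hj.1 hj'.1 hne) hj.2) hj'.2
  have hdegB : ∀ i : ι, (B.filter (fun j => i ∈ Fj j)).card ≤ 1 := by
    intro i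
    refine Finset.card_le_one.mpr ?_
    intro j hj j' hj'
    simp only [mem_filter] at hj hj'
    by_contra hne
    exact (Finset.disjoint_left.mp (hB hj.1 hj'.1 hne) hj.2) hj'.2
  have hTsub : ∀ i : ι, R.filter (fun j => i ∈ Fj j) ⊆
      A.filter (fun j => i ∈ Fj j) ∪ B.filter (fun j => i ∈ Fj j) := by
    intro i j hj
    simp only [hRdef, mem_filter, mem_union] at hj ⊢
    tauto
  have hdeg : ∀ i : ι, (R.filter (fun j => i ∈ Fj j)).card ≤ 2 := by
    intro i
    calc (R.filter (fun j => i ∈ Fj j)).card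
        ≤ (A.filter (fun j => i ∈ Fj j) ∪ B.filter (fun j => i ∈ Fj j)).card :=
          Finset.card_le_card (hTsub i)
      _ ≤ (A.filter (fun j => i ∈ Fj j)).card + (B.filter (fun j => i ∈ Fj j)).card :=
          Finset.card_union_le _ _
      _ ≤ 2 := by have := hdegA i; have := hdegB i; omega
  have hdc : ∑ j ∈ R, (Fj j ∩ S).card = ∑ i ∈ S, (R.filter (fun j => i ∈ Fj j)).card := by
    have h1 : ∀ j, (Fj j ∩ S).card = ∑ i ∈ S, if i ∈ Fj j then 1 else 0 := by
      intro j
      rw [Finset.inter_comm, ← Finset.filter_mem_eq_inter, Finset.card_filter]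
    have h2' : ∀ i, (R.filter (fun j => i ∈ Fj j)).card = ∑ j ∈ R, if i ∈ Fj j then 1 else 0 := by
      intro i; rw [Finset.card_filter]
    simp_rw [h1, h2']
    exact Finset.sum_comm
  have hlow : 2 * R.card ≤ ∑ j ∈ R, (Fj j ∩ S).card := by
    calc 2 * R.card = ∑ _j ∈ R, 2 := by rw [Finset.sum_const, smul_eq_mul, mul_comm]
      _ ≤ ∑ j ∈ R, (Fj j ∩ S).card := by
          refine Finset.sum_le_sum ?_
          intro j hj
          simp only [hRdef, mem_filter] at hj
          exact h2 j hj.1 hj.2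
  have hhigh : ∑ i ∈ S, (R.filter (fun j => i ∈ Fj j)).card ≤ 2 * S.card := by
    calc ∑ i ∈ S, (R.filter (fun j => i ∈ Fj j)).card ≤ ∑ _i ∈ S, 2 :=
          Finset.sum_le_sum fun i _ => hdeg i
      _ = 2 * S.card := by rw [Finset.sum_const, smul_eq_mul, mul_comm]
  have hRS : R.card ≤ S.card := by omega
  set M : Matrix ↥R ↥S ℝ := fun j i => if (i : ι) ∈ Fj (j : κ) then 1 else 0 with hM
  have hninj : ¬ Function.Injective M.mulVecLin := by
    rcases lt_or_eq_of_le hRS with hlt | heq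
    · intro hinj
      have hle := LinearMap.finrank_le_finrank_of_injective hinj
      rw [Module.finrank_fintype_fun_eq_card, Module.finrank_fintype_fun_eq_card,
        Fintype.card_coe, Fintype.card_coe] at hle
      omega
    · -- equality case
      have hdegsum : ∑ i ∈ S, (R.filter (fun j => i ∈ Fj j)).card = 2 * S.card := by omega
      have hdeg2 : ∀ i ∈ S, (R.filter (fun j => i ∈ Fj j)).card = 2 := by
        by_contra hcon
        push_neg at hcon
        obtain ⟨i₀, hi₀, hne⟩ := hcon
        have hlt2 : (R.filter (fun j => i₀ ∈ Fj j)).card < 2 := lt_of_le_of_ne (hdeg i₀) hne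
        have hstrict : ∑ i ∈ S, (R.filter (fun j => i ∈ Fj j)).card < ∑ _i ∈ S, 2 :=
          Finset.sum_lt_sum (fun i _ => hdeg i) ⟨i₀, hi₀, hlt2⟩
        rw [Finset.sum_const, smul_eq_mul] at hstrict
        omega
      have hstruct : ∀ i ∈ S, ∃ a b : κ, a ∈ A ∧ a ∉ B ∧ b ∈ B ∧ b ∉ A ∧ a ≠ b ∧
          R.filter (fun j => i ∈ Fj j) = {a, b} := by
        intro i hi
        have hT2 : (R.filter (fun j => i ∈ Fj j)).card = 2 := hdeg2 i hi
        have hsub := hTsub i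
        have h2le : 2 ≤ ((A.filter (fun j => i ∈ Fj j)) ∪ (B.filter (fun j => i ∈ Fj j))).card := by
          rw [← hT2]; exact Finset.card_le_card hsub
        have hU := Finset.card_union_le (A.filter (fun j => i ∈ Fj j)) (B.filter (fun j => i ∈ Fj j))
        have hA1 : (A.filter (fun j => i ∈ Fj j)).card = 1 := by
          have := hdegA i; have := hdegB i; omega
        have hB1 : (B.filter (fun j => i ∈ Fj j)).card = 1 := by
          have := hdegA i; have := hdegB i; omega
        obtain ⟨a, ha⟩ := Finset.card_eq_one.mp hA1
        obtain ⟨b, hb⟩ := Finset.card_eq_one.mp hB1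
        have haA : a ∈ A ∧ i ∈ Fj a := by
          have : a ∈ A.filter (fun j => i ∈ Fj j) := ha ▸ Finset.mem_singleton_self a
          simpa using this
        have hbB : b ∈ B ∧ i ∈ Fj b := by
          have : b ∈ B.filter (fun j => i ∈ Fj j) := hb ▸ Finset.mem_singleton_self b
          simpa using this
        have hab : a ≠ b := by
          intro h
          rw [ha, hb, ← h, Finset.union_idempotent, Finset.card_singleton] at h2le
          omega
        have haB : a ∉ B := by
          intro haB'
          have : a ∈ B.filter (fun j => i ∈ Fj j) := Finset.mem_filter.mpr ⟨haB', haA.2⟩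
          rw [hb, Finset.mem_singleton] at this
          exact hab this
        have hbA : b ∉ A := by
          intro hbA'
          have : b ∈ A.filter (fun j => i ∈ Fj j) := Finset.mem_filter.mpr ⟨hbA', hbB.2⟩
          rw [ha, Finset.mem_singleton] at this
          exact hab this.symm
        refine ⟨a, b, haA.1, haB, hbB.1, hbA, hab, ?_⟩
        have hsub2 : R.filter (fun j => i ∈ Fj j) ⊆ {a, b} := by
          intro j hj
          have := hsub hj
          rw [ha, hb] at this
          simpa using this
        refine Finset.eq_of_subset_of_card_le hsub2 ?_
        rw [hT2, Finset.card_pair hab]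
      set c : κ → ℝ := fun j => (if j ∈ A then (1:ℝ) else 0) - (if j ∈ B then 1 else 0) with hc
      have hker : ∀ x : ↥S → ℝ, ∑ j : ↥R, c ↑j * (M.mulVecLin x) j = 0 := by
        intro x
        have expand : ∀ j : ↥R, (M.mulVecLin x) j = ∑ i : ↥S, M j i * x i := by
          intro j; simp [Matrix.mulVecLin_apply, Matrix.mulVec, dotProduct, Finset.univ_eq_attach]
        calc ∑ j : ↥R, c ↑j * (M.mulVecLin x) j
            = ∑ j : ↥R, ∑ i : ↥S, c ↑j * (M j i * x i) := by
              refine Finset.sum_congr rfl fun j _ => ?_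
              rw [expand, Finset.mul_sum]
          _ = ∑ i : ↥S, (∑ j : ↥R, c ↑j * M j i) * x i := by
              rw [Finset.sum_comm]
              refine Finset.sum_congr rfl fun i _ => ?_
              rw [Finset.sum_mul]
              exact Finset.sum_congr rfl fun j _ => (mul_assoc _ _ _).symm
          _ = ∑ i : ↥S, (0:ℝ) * x i := by
              refine Finset.sum_congr rfl fun i _ => ?_
              congr 1
              obtain ⟨a, b, haA, haB, hbB, hbA, hab, hT⟩ := hstruct ↑i i.2
              have hrw : ∑ j : ↥R, c ↑j * M j i
                  = ∑ j ∈ R, if (↑i:ι) ∈ Fj j then c j else 0 := by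
                rw [← Finset.sum_coe_sort R (fun j => if (↑i:ι) ∈ Fj j then c j else 0)]
                refine Finset.sum_congr rfl fun j _ => ?_
                simp [hM, mul_ite, mul_one, mul_zero]
              rw [hrw, ← Finset.sum_filter, hT, Finset.sum_pair hab]
              simp [hc, haA, haB, hbB, hbA]
          _ = 0 := by simp
      obtain ⟨i₁, hi₁⟩ := hS
      obtain ⟨a, b, haA, haB, hbB, hbA, hab, hT⟩ := hstruct i₁ hi₁
      have hj₀ : a ∈ R := by
        have : a ∈ R.filter (fun j => i₁ ∈ Fj j) := by
          rw [hT]; exact Finset.mem_insert_self a _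
        exact Finset.mem_of_mem_filter a this
      have hca : c a = 1 := by simp [hc, haA, haB]
      intro hinj
      have hfr : Module.finrank ℝ (↥S → ℝ) = Module.finrank ℝ (↥R → ℝ) := by
        rw [Module.finrank_fintype_fun_eq_card, Module.finrank_fintype_fun_eq_card,
          Fintype.card_coe, Fintype.card_coe, heq]
      have hsurj := (LinearMap.injective_iff_surjective_of_finrank_eq_finrank hfr).mp hinj
      obtain ⟨x, hx⟩ := hsurj ((Pi.single (⟨a, hj₀⟩ : ↥R) 1 : ↥R → ℝ))
      have h0 := hker x
      rw [hx] at h0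
      have hsingle : ∑ j : ↥R, c ↑j * (Pi.single (⟨a, hj₀⟩ : ↥R) 1 : ↥R → ℝ) j = c a := by
        simp [Pi.single_apply, mul_ite, mul_one, mul_zero]
      rw [hsingle, hca] at h0
      norm_num at h0
  have hex : ∃ x : ↥S → ℝ, M.mulVecLin x = 0 ∧ x ≠ 0 := by
    by_contra hcon
    push_neg at hcon
    exact hninj ((injective_iff_map_eq_zero M.mulVecLin).mpr hcon)
  obtain ⟨x, hxker, hx0⟩ := hex
  refine ⟨fun i => if h : i ∈ S then x ⟨i, h⟩ else 0, ?_, ?_, ?_⟩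
  · obtain ⟨i₀, hi₀⟩ := Function.ne_iff.mp hx0
    refine ⟨↑i₀, ?_⟩
    simpa [dif_pos i₀.2] using hi₀
  · intro i hi; simp [dif_neg hi]
  · intro j hj
    set d : ι → ℝ := fun i => if h : i ∈ S then x ⟨i, h⟩ else 0 with hd
    have hzero : ∀ i ∈ Fj j, i ∉ Fj j ∩ S → d i = 0 := by
      intro i _ hi
      have : i ∉ S := by
        intro hiS; exact hi (Finset.mem_inter.mpr ⟨‹i ∈ Fj j›, hiS⟩)
      simp [hd, dif_neg this]
    rw [← Finset.sum_subset (Finset.inter_subset_left) hzero]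
    by_cases hjR : j ∈ R
    · have := congrFun hxker ⟨j, hjR⟩
      have hval : (M.mulVecLin x) ⟨j, hjR⟩ = ∑ i ∈ Fj j ∩ S, d i := by
        have expand : (M.mulVecLin x) ⟨j, hjR⟩ = ∑ i : ↥S, M ⟨j, hjR⟩ i * x i := by
          simp [Matrix.mulVecLin_apply, Matrix.mulVec, dotProduct, Finset.univ_eq_attach]
        rw [expand]
        have : ∑ i : ↥S, M ⟨j, hjR⟩ i * x i = ∑ i ∈ S, if i ∈ Fj j then d i else 0 := by
          rw [← Finset.sum_coe_sort S (fun i => if i ∈ Fj j then d i else 0)]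
          refine Finset.sum_congr rfl fun i _ => ?_
          simp [hM, hd, mul_ite, mul_one, mul_zero, dif_pos i.2]
        rw [this, ← Finset.sum_filter, Finset.inter_comm, Finset.filter_mem_eq_inter]
      rw [← hval, this]
      rfl
    · have : Fj j ∩ S = ∅ := by
        rw [hRdef] at hjR
        simp only [Finset.mem_filter] at hjR
        push_neg at hjR
        exact hjR hj
      rw [this, Finset.sum_empty]

lemma step_lemma {ι : Type*} [Fintype ι]
    (y d : ι → ℝ) (hy0 : ∀ i, 0 ≤ y i) (hy1 : ∀ i, y i ≤ 1)
    (hd0 : ∃ i, d i ≠ 0)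
    (hsupp : ∀ i, ¬(y i ≠ 0 ∧ y i ≠ 1) → d i = 0) :
    ∃ t : ℝ, 0 < t ∧ (∀ i, 0 ≤ y i + t * d i) ∧ (∀ i, y i + t * d i ≤ 1) ∧
      (∀ i, ¬(y i ≠ 0 ∧ y i ≠ 1) → y i + t * d i = y i) ∧
      (∃ i₀, (y i₀ ≠ 0 ∧ y i₀ ≠ 1) ∧ (y i₀ + t * d i₀ = 0 ∨ y i₀ + t * d i₀ = 1)) := by
  classical
  set T : Finset ι := Finset.univ.filter (fun i => d i ≠ 0) with hT
  have hTne : T.Nonempty := by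
    obtain ⟨i, hi⟩ := hd0; exact ⟨i, by simp [hT, hi]⟩
  set c : ι → ℝ := fun i => if 0 < d i then (1 - y i) / d i else y i / (-d i) with hc
  obtain ⟨i₀, hi₀T, hi₀min⟩ := T.exists_min_image c hTne
  have hfrac : ∀ i ∈ T, (y i ≠ 0 ∧ y i ≠ 1) := by
    intro i hi
    have hdi : d i ≠ 0 := by simpa [hT] using hi
    by_contra hcon
    exact hdi (hsupp i hcon)
  have hfrac' : ∀ i ∈ T, 0 < y i ∧ y i < 1 := by
    intro i hi
    obtain ⟨h0, h1⟩ := hfrac i hi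
    exact ⟨lt_of_le_of_ne (hy0 i) (Ne.symm h0), lt_of_le_of_ne (hy1 i) h1⟩
  have hcpos : ∀ i ∈ T, 0 < c i := by
    intro i hi
    have hdi : d i ≠ 0 := by simpa [hT] using hi
    obtain ⟨h0, h1⟩ := hfrac' i hi
    rcases lt_or_gt_of_ne hdi with hneg | hpos
    · rw [hc]
      simp only [if_neg (not_lt.mpr hneg.le)]
      exact div_pos h0 (by linarith)
    · rw [hc]
      simp only [if_pos hpos]
      exact div_pos (by linarith) hpos
  set t := c i₀ with ht
  have htpos : 0 < t := hcpos i₀ hi₀T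
  have hd₀ : d i₀ ≠ 0 := by simpa [hT] using hi₀T
  refine ⟨t, htpos, ?_, ?_, ?_, ?_⟩
  · intro i
    by_cases hdi : d i = 0
    · simp [hdi]; exact hy0 i
    · have hiT : i ∈ T := by simp [hT, hdi]
      have htc : t ≤ c i := hi₀min i hiT
      rcases lt_or_gt_of_ne hdi with hneg | hpos
      · have hci : c i = y i / (-d i) := by rw [hc]; simp only [if_neg (not_lt.mpr hneg.le)]
        rw [hci] at htc
        have hnd : 0 < -d i := by linarith
        have := (le_div_iff₀ hnd).mp htc
        nlinarith
      · nlinarith [hy0 i]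
  · intro i
    by_cases hdi : d i = 0
    · simp [hdi]; exact hy1 i
    · have hiT : i ∈ T := by simp [hT, hdi]
      have htc : t ≤ c i := hi₀min i hiT
      rcases lt_or_gt_of_ne hdi with hneg | hpos
      · nlinarith [hy1 i]
      · have hci : c i = (1 - y i) / d i := by rw [hc]; simp only [if_pos hpos]
        rw [hci] at htc
        have := (le_div_iff₀ hpos).mp htc
        nlinarith
  · intro i hi
    rw [hsupp i hi, mul_zero, add_zero]
  · refine ⟨i₀, hfrac i₀ hi₀T, ?_⟩
    rcases lt_or_gt_of_ne hd₀ with hneg | hpos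
    · left
      have hci : t = y i₀ / (-d i₀) := by rw [ht, hc]; simp only [if_neg (not_lt.mpr hneg.le)]
      have hnd : -d i₀ ≠ 0 := neg_ne_zero.mpr hd₀
      rw [hci]
      field_simp
      ring
    · right
      have hci : t = (1 - y i₀) / d i₀ := by rw [ht, hc]; simp only [if_pos hpos]
      rw [hci]
      field_simp
      ring



/-- Given a fractional point ȳ of the two-partition-matroid polytope with
budget Σ w ȳ ≤ B₀, there is an integral point ŷ with the same constraints
and Σ w ŷ ≤ B₀. -/
theorem exists_integral_rounding {ι κ : Type*} [Fintype ι] [DecidableEq κ]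
    (A B : Finset κ) (Fj : κ → Finset ι)
    (hA : (A : Set κ).Pairwise fun j j' => Disjoint (Fj j) (Fj j'))
    (hB : (B : Set κ).Pairwise fun j j' => Disjoint (Fj j) (Fj j'))
    (w : ι → ℝ) (hw : ∀ i, 0 ≤ w i) (B₀ : ℝ) (hB₀ : 0 ≤ B₀)
    (ybar : ι → ℝ) (hy0 : ∀ i, 0 ≤ ybar i) (hy1 : ∀ i, ybar i ≤ 1)
    (hcov : ∀ j ∈ A ∪ B, ∑ i ∈ Fj j, ybar i = 1)
    (hbud : ∑ i, w i * ybar i ≤ B₀) :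
    ∃ yhat : ι → ℝ, (∀ i, yhat i = 0 ∨ yhat i = 1) ∧
      (∀ j ∈ A ∪ B, ∑ i ∈ Fj j, yhat i = 1) ∧
      ∑ i, w i * yhat i ≤ B₀ := by
  classical
  suffices H : ∀ n : ℕ, ∀ y : ι → ℝ, (∀ i, 0 ≤ y i) → (∀ i, y i ≤ 1) →
      (∀ j ∈ A ∪ B, ∑ i ∈ Fj j, y i = 1) → (∑ i, w i * y i ≤ B₀) →
      (Finset.univ.filter (fun i => y i ≠ 0 ∧ y i ≠ 1)).card ≤ n →
      ∃ yhat : ι → ℝ, (∀ i, yhat i = 0 ∨ yhat i = 1) ∧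
        (∀ j ∈ A ∪ B, ∑ i ∈ Fj j, yhat i = 1) ∧ ∑ i, w i * yhat i ≤ B₀ by
    exact H _ ybar hy0 hy1 hcov hbud le_rfl
  intro n
  induction n with
  | zero =>
    intro y h0 h1 hc hb hcard
    refine ⟨y, ?_, hc, hb⟩
    intro i
    by_contra hcon
    push_neg at hcon
    have hmem : i ∈ Finset.univ.filter (fun i => y i ≠ 0 ∧ y i ≠ 1) := by
      simp [hcon.1, hcon.2]
    have := Finset.card_pos.mpr ⟨i, hmem⟩
    omega
  | succ n ih =>
    intro y h0 h1 hc hb hcard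
    by_cases hint : ∀ i, y i = 0 ∨ y i = 1
    · exact ⟨y, hint, hc, hb⟩
    push_neg at hint
    set S := Finset.univ.filter (fun i => y i ≠ 0 ∧ y i ≠ 1) with hSdef
    have hSne : S.Nonempty := by
      obtain ⟨i, hi⟩ := hint
      exact ⟨i, by simp [hSdef, hi.1, hi.2]⟩
    have hSmem : ∀ i, i ∈ S ↔ (y i ≠ 0 ∧ y i ≠ 1) := by
      intro i; simp [hSdef]
    have h2 : ∀ j ∈ A ∪ B, (Fj j ∩ S).Nonempty → 2 ≤ (Fj j ∩ S).card := by
      rintro j hj ⟨i, hi⟩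
      by_contra hlt
      push_neg at hlt
      have hone : ∀ i' ∈ Fj j ∩ S, i' = i := by
        intro i' hi'
        exact Finset.card_le_one.mp (by omega) i' hi' i hi
      have hii : i ∈ Fj j := (Finset.mem_inter.mp hi).1
      have hifrac : y i ≠ 0 ∧ y i ≠ 1 := (hSmem i).mp (Finset.mem_inter.mp hi).2
      have hint' : ∀ i' ∈ (Fj j).erase i, y i' = 0 ∨ y i' = 1 := by
        intro i' hi'
        by_contra hcon
        push_neg at hcon
        have hm : i' ∈ Fj j ∩ S :=
          Finset.mem_inter.mpr ⟨(Finset.mem_erase.mp hi').2, (hSmem i').mpr hcon⟩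
        exact (Finset.mem_erase.mp hi').1 (hone i' hm)
      have hsplit : y i + ∑ i' ∈ (Fj j).erase i, y i' = 1 := by
        rw [Finset.add_sum_erase _ _ hii]
        exact hc j hj
      have hsum01 : ∑ i' ∈ (Fj j).erase i, y i'
          = ((((Fj j).erase i)).filter (fun i' => y i' = 1)).card := by
        rw [← Finset.sum_boole]
        refine Finset.sum_congr rfl fun i' hi' => ?_
        rcases hint' i' hi' with h | h <;> simp [h]
      set k := ((((Fj j).erase i)).filter (fun i' => y i' = 1)).card with hk
      rw [hsum01] at hsplit
      rcases Nat.eq_zero_or_pos k with hk0 | hk1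
      · rw [hk0] at hsplit
        norm_num at hsplit
        exact hifrac.2 hsplit
      · have : (1:ℝ) ≤ (k:ℝ) := by exact_mod_cast hk1
        have hyle : y i ≤ 0 := by linarith
        exact hifrac.1 (le_antisymm hyle (h0 i))
    obtain ⟨d, hd0, hdsupp, hdsum⟩ := exists_kernel_vec A B Fj hA hB S hSne h2
    have main : ∀ d' : ι → ℝ, (∃ i, d' i ≠ 0) → (∀ i ∉ S, d' i = 0) →
        (∀ j ∈ A ∪ B, ∑ i ∈ Fj j, d' i = 0) → (∑ i, w i * d' i ≤ 0) →
        ∃ yhat : ι → ℝ, (∀ i, yhat i = 0 ∨ yhat i = 1) ∧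
          (∀ j ∈ A ∪ B, ∑ i ∈ Fj j, yhat i = 1) ∧ ∑ i, w i * yhat i ≤ B₀ := by
      intro d' hd0' hsupp' hsum' hwd'
      obtain ⟨t, htpos, hb0, hb1, hunch, i₁, hi₁frac, hi₁int⟩ :=
        step_lemma y d' h0 h1 hd0' (fun i hi => hsupp' i (by simp [hSmem, hi]))
      set y' : ι → ℝ := fun i => y i + t * d' i with hy'
      have hcov' : ∀ j ∈ A ∪ B, ∑ i ∈ Fj j, y' i = 1 := by
        intro j hj
        rw [hy']
        simp only
        rw [Finset.sum_add_distrib, ← Finset.mul_sum, hsum' j hj, hc j hj, mul_zero, add_zero]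
      have hbud' : ∑ i, w i * y' i ≤ B₀ := by
        have hexp : ∑ i, w i * (y i + t * d' i) = ∑ i, w i * y i + t * ∑ i, w i * d' i := by
          rw [Finset.mul_sum, ← Finset.sum_add_distrib]
          exact Finset.sum_congr rfl fun i _ => by ring
        rw [show (∑ i, w i * y' i) = ∑ i, w i * (y i + t * d' i) from rfl, hexp]
        have := mul_nonpos_of_nonneg_of_nonpos htpos.le hwd'
        linarith
      have hsub : Finset.univ.filter (fun i => y' i ≠ 0 ∧ y' i ≠ 1) ⊆ S := by
        intro i hi
        simp only [Finset.mem_filter, Finset.mem_univ, true_and] at hi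
        rw [hSmem]
        by_contra hcon
        have := hunch i hcon
        rw [hy'] at hi
        simp only at hi
        rw [this] at hi
        exact hcon hi
      have hnotmem : i₁ ∉ Finset.univ.filter (fun i => y' i ≠ 0 ∧ y' i ≠ 1) := by
        simp only [Finset.mem_filter, Finset.mem_univ, true_and]
        rw [hy']
        simp only
        rcases hi₁int with h | h
        · intro hcon; exact hcon.1 h
        · intro hcon; exact hcon.2 h
      have hmem1 : i₁ ∈ S := (hSmem i₁).mpr hi₁frac
      have hss : Finset.univ.filter (fun i => y' i ≠ 0 ∧ y' i ≠ 1) ⊂ S :=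
        Finset.ssubset_iff_of_subset hsub |>.mpr ⟨i₁, hmem1, hnotmem⟩
      have hcard' : (Finset.univ.filter (fun i => y' i ≠ 0 ∧ y' i ≠ 1)).card ≤ n := by
        have := Finset.card_lt_card hss
        omega
      exact ih y' (fun i => hb0 i) (fun i => hb1 i) hcov' hbud' hcard'
    rcases le_or_gt (∑ i, w i * d i) 0 with hle | hgt
    · exact main d hd0 hdsupp hdsum hle
    · refine main (fun i => -d i) ?_ ?_ ?_ ?_
      · obtain ⟨i, hi⟩ := hd0
        exact ⟨i, by simpa using hi⟩
      · intro i hi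
        simp [hdsupp i hi]
      · intro j hj
        simp [Finset.sum_neg_distrib, hdsum j hj]
      · simp only [mul_neg]
        rw [Finset.sum_neg_distrib]
        linarith
end

section
/- Suppose additionally that ȳ_i = 1 for all i in a subset F₁ ⊆ F. Then the integral point ŷ in the previous statement can be chosen so that ŷ_i = 1 for all i ∈ F₁. -/
open Finset

lemma exists_nonzero_kernel {ι κ : Type*} [Fintype ι] [DecidableEq κ] [DecidableEq ι]
    (A B : Finset κ) (Fj : κ → Finset ι)
    (hA : (A : Set κ).Pairwise fun j j' => Disjoint (Fj j) (Fj j'))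
    (hB : (B : Set κ).Pairwise fun j j' => Disjoint (Fj j) (Fj j'))
    (S : Finset ι) (hS : S.Nonempty)
    (hcard : ∀ j ∈ A ∪ B, (Fj j ∩ S).Nonempty → 2 ≤ (Fj j ∩ S).card) :
    ∃ d : ι → ℝ, (∀ i, i ∉ S → d i = 0) ∧ (∀ j ∈ A ∪ B, ∑ i ∈ Fj j, d i = 0) ∧ d ≠ 0 := by
  classical
  by_contra hcon
  push_neg at hcon
  set J : Finset κ := (A ∪ B).filter (fun j => (Fj j ∩ S).Nonempty) with hJ
  -- per-element family-count bound
  have hA1 : ∀ i, (A.filter (fun j => i ∈ Fj j)).card ≤ 1 := by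
    intro i
    refine Finset.card_le_one.mpr ?_
    intro j hj j' hj'
    simp only [mem_filter] at hj hj'
    by_contra hne
    exact absurd ((hA hj.1 hj'.1 hne).le_bot (by simp [hj.2, hj'.2] : i ∈ Fj j ⊓ Fj j')) (by simp)
  have hB1 : ∀ i, (B.filter (fun j => i ∈ Fj j)).card ≤ 1 := by
    intro i
    refine Finset.card_le_one.mpr ?_
    intro j hj j' hj'
    simp only [mem_filter] at hj hj'
    by_contra hne
    exact absurd ((hB hj.1 hj'.1 hne).le_bot (by simp [hj.2, hj'.2] : i ∈ Fj j ⊓ Fj j')) (by simp)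
  have ht2 : ∀ i, (J.filter (fun j => i ∈ Fj j)).card ≤ 2 := by
    intro i
    have hsub : J.filter (fun j => i ∈ Fj j) ⊆
        A.filter (fun j => i ∈ Fj j) ∪ B.filter (fun j => i ∈ Fj j) := by
      intro j hj
      simp only [mem_filter, hJ, mem_union] at hj ⊢
      rcases hj.1.1 with h | h
      · exact Or.inl ⟨h, hj.2⟩
      · exact Or.inr ⟨h, hj.2⟩
    calc (J.filter (fun j => i ∈ Fj j)).card ≤ _ := Finset.card_le_card hsub
      _ ≤ _ := Finset.card_union_le _ _
      _ ≤ 2 := by have := hA1 i; have := hB1 i; omega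
  -- the matrix and linear map
  set M : Matrix ↥J ↥S ℝ := fun j i => if (i : ι) ∈ Fj (j : κ) then 1 else 0 with hM
  set T := M.mulVecLin with hT
  have hTapp : ∀ (x : ↥S → ℝ) (j : ↥J), T x j = ∑ i ∈ S.attach, if (i:ι) ∈ Fj (j:κ) then x i else 0 := by
    intro x j
    rw [hT, Matrix.mulVecLin_apply]
    simp [Matrix.mulVec, dotProduct, hM, ite_mul, Finset.sum_attach]
  -- ker T = ⊥
  have hker : LinearMap.ker T = ⊥ := by
    rw [LinearMap.ker_eq_bot']
    intro x hx
    set d : ι → ℝ := fun i => if h : i ∈ S then x ⟨i, h⟩ else 0 with hd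
    have hsupp : ∀ i, i ∉ S → d i = 0 := by intro i hi; simp [hd, hi]
    have hsum0 : ∀ j ∈ A ∪ B, ∑ i ∈ Fj j, d i = 0 := by
      intro j hj
      by_cases hne : (Fj j ∩ S).Nonempty
      · have hjJ : j ∈ J := by simp [hJ, mem_filter, hj, hne]
        have h1 : ∑ i ∈ Fj j, d i = ∑ i ∈ S, if i ∈ Fj j then d i else 0 := by
          rw [Finset.sum_ite_mem]
          rw [Finset.inter_comm]
          exact (Finset.sum_subset Finset.inter_subset_left
            (fun i hi his => hsupp i (fun hS' => his (Finset.mem_inter.mpr ⟨hi, hS'⟩)))).symm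
        have h2 : T x ⟨j, hjJ⟩ = 0 := by rw [hx]; rfl
        rw [hTapp] at h2
        have h3 : ∑ i ∈ S.attach, (if (i:ι) ∈ Fj j then d i else 0)
            = ∑ i ∈ S.attach, if (i:ι) ∈ Fj j then x i else 0 := by
          apply Finset.sum_congr rfl
          intro i _
          by_cases hij : (i:ι) ∈ Fj j <;> simp [hij, hd, i.2]
        rw [h1, ← Finset.sum_attach S (fun i => if i ∈ Fj j then d i else 0), h3]
        exact h2
      · rw [Finset.not_nonempty_iff_eq_empty] at hne
        apply Finset.sum_eq_zero
        intro i hi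
        apply hsupp
        intro hiS
        exact absurd (Finset.mem_inter.mpr ⟨hi, hiS⟩) (by simp [hne])
    have hd0 := hcon d hsupp hsum0
    funext i
    have : d (i:ι) = 0 := by rw [hd0]; rfl
    simpa [hd, i.2] using this
  -- dimension bookkeeping
  have hdom : Module.finrank ℝ (↥S → ℝ) = S.card := by
    rw [Module.finrank_fintype_fun_eq_card, Fintype.card_coe]
  have hcod : Module.finrank ℝ (↥J → ℝ) = J.card := by
    rw [Module.finrank_fintype_fun_eq_card, Fintype.card_coe]
  have hrn := LinearMap.finrank_range_add_finrank_ker T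
  rw [hker, finrank_bot, hdom] at hrn
  have hrange_le : Module.finrank ℝ ↥(LinearMap.range T) ≤ J.card := by
    have := Submodule.finrank_le (LinearMap.range T)
    omega
  have hle1 : S.card ≤ J.card := by omega
  -- double counting
  have hdc : ∑ j ∈ J, (Fj j ∩ S).card = ∑ i ∈ S, (J.filter (fun j => i ∈ Fj j)).card := by
    have h4 : ∀ j, (Fj j ∩ S).card = ∑ i ∈ S, if i ∈ Fj j then 1 else 0 := by
      intro j
      rw [← Finset.card_filter]
      congr 1
      ext i
      simp [Finset.mem_inter, Finset.mem_filter, and_comm]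
    simp only [h4]
    rw [Finset.sum_comm]
    apply Finset.sum_congr rfl
    intro i _
    rw [← Finset.card_filter]
  have hge2 : ∀ j ∈ J, 2 ≤ (Fj j ∩ S).card := by
    intro j hj
    simp only [hJ, mem_filter] at hj
    exact hcard j hj.1 hj.2
  have hsum_ge : 2 * J.card ≤ ∑ j ∈ J, (Fj j ∩ S).card := by
    calc 2 * J.card = ∑ _j ∈ J, 2 := by rw [Finset.sum_const]; ring
    _ ≤ _ := Finset.sum_le_sum hge2
  have hsum_le : ∑ i ∈ S, (J.filter (fun j => i ∈ Fj j)).card ≤ 2 * S.card := by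
    calc ∑ i ∈ S, (J.filter (fun j => i ∈ Fj j)).card ≤ ∑ _i ∈ S, 2 :=
      Finset.sum_le_sum (fun i _ => ht2 i)
    _ = 2 * S.card := by rw [Finset.sum_const]; ring
  have hmn : J.card = S.card := by omega
  -- tightness: every i ∈ S lies in exactly two members of J
  have htight : ∀ i ∈ S, (J.filter (fun j => i ∈ Fj j)).card = 2 := by
    intro i hi
    by_contra hne
    have hlt : (J.filter (fun j => i ∈ Fj j)).card < 2 := lt_of_le_of_ne (ht2 i) hne
    have : ∑ i' ∈ S, (J.filter (fun j => i' ∈ Fj j)).card < 2 * S.card := by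
      rw [← Finset.add_sum_erase _ _ hi]
      have h1 : ∑ i' ∈ S.erase i, (J.filter (fun j => i' ∈ Fj j)).card ≤ 2 * (S.card - 1) := by
        calc _ ≤ ∑ _i' ∈ S.erase i, 2 := Finset.sum_le_sum (fun i' _ => ht2 i')
        _ = 2 * (S.card - 1) := by rw [Finset.sum_const, Finset.card_erase_of_mem hi]; ring
      have hc1 : 1 ≤ S.card := hS.card_pos
      omega
    omega
  -- structure: each i ∈ S has exactly one A-family and one non-A (hence B) family in J
  have hstruct : ∀ i ∈ S, ∃ jA jB, jA ∈ J ∧ jB ∈ J ∧ jA ∈ A ∧ jB ∉ A ∧ jA ≠ jB ∧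
      J.filter (fun j => i ∈ Fj j) = {jA, jB} := by
    intro i hi
    obtain ⟨j₁, j₂, hne12, hpair⟩ := Finset.card_eq_two.mp (htight i hi)
    have hj₁ : j₁ ∈ J.filter (fun j => i ∈ Fj j) := by rw [hpair]; simp
    have hj₂ : j₂ ∈ J.filter (fun j => i ∈ Fj j) := by rw [hpair]; simp
    simp only [mem_filter] at hj₁ hj₂
    have hnotboth : ¬ (j₁ ∈ A ∧ j₂ ∈ A) := by
      rintro ⟨h1, h2⟩
      have hsub : ({j₁, j₂} : Finset κ) ⊆ A.filter (fun j => i ∈ Fj j) := by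
        intro j hj
        simp only [Finset.mem_insert, Finset.mem_singleton] at hj
        rcases hj with rfl | rfl <;> simp [mem_filter, h1, h2, hj₁.2, hj₂.2]
      have hle := Finset.card_le_card hsub
      rw [Finset.card_pair hne12] at hle
      have := hA1 i; omega
    have hnotneither : ¬ (j₁ ∉ A ∧ j₂ ∉ A) := by
      rintro ⟨h1, h2⟩
      have hb₁ : j₁ ∈ B := by
        have := hj₁.1; simp only [hJ, mem_filter, mem_union] at this; tauto
      have hb₂ : j₂ ∈ B := by
        have := hj₂.1; simp only [hJ, mem_filter, mem_union] at this; tauto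
      have hsub : ({j₁, j₂} : Finset κ) ⊆ B.filter (fun j => i ∈ Fj j) := by
        intro j hj
        simp only [Finset.mem_insert, Finset.mem_singleton] at hj
        rcases hj with rfl | rfl <;> simp [mem_filter, hb₁, hb₂, hj₁.2, hj₂.2]
      have hle := Finset.card_le_card hsub
      rw [Finset.card_pair hne12] at hle
      have := hB1 i; omega
    by_cases h1 : j₁ ∈ A
    · by_cases h2 : j₂ ∈ A
      · exact absurd ⟨h1, h2⟩ hnotboth
      · exact ⟨j₁, j₂, hj₁.1, hj₂.1, h1, h2, hne12, hpair⟩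
    · have h2 : j₂ ∈ A := by by_contra h2; exact hnotneither ⟨h1, h2⟩
      exact ⟨j₂, j₁, hj₂.1, hj₁.1, h2, h1, hne12.symm, by rw [hpair]; exact Finset.pair_comm _ _⟩
  -- the linear functional vanishing on the range of T
  set c : κ → ℝ := fun j => if j ∈ A then 1 else -1 with hc
  set φ : (↥J → ℝ) →ₗ[ℝ] ℝ :=
    { toFun := fun v => ∑ j ∈ J.attach, c ↑j * v j
      map_add' := by intro v u; simp [mul_add, Finset.sum_add_distrib]
      map_smul' := by
        intro r v; simp only [Finset.mul_sum, RingHom.id_apply, smul_eq_mul, Pi.smul_apply]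
        apply Finset.sum_congr rfl; intros; ring } with hφ
  have hφapp : ∀ v : ↥J → ℝ, φ v = ∑ j ∈ J.attach, c ↑j * v j := fun v => rfl
  have hrange : LinearMap.range T ≤ LinearMap.ker φ := by
    rintro _ ⟨v, rfl⟩
    simp only [LinearMap.mem_ker]
    rw [hφapp]
    have hcalc : (∑ j ∈ J.attach, c ↑j * T v j)
        = ∑ i ∈ S.attach, (∑ j ∈ J.attach, if (i:ι) ∈ Fj (j:κ) then c ↑j else 0) * v i := by
      simp only [hTapp]
      calc ∑ j ∈ J.attach, c ↑j * ∑ i ∈ S.attach, (if (i:ι) ∈ Fj (j:κ) then v i else 0)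
          = ∑ j ∈ J.attach, ∑ i ∈ S.attach, (if (i:ι) ∈ Fj (j:κ) then c ↑j * v i else 0) := by
            apply Finset.sum_congr rfl; intro j _
            rw [Finset.mul_sum]
            apply Finset.sum_congr rfl; intro i _
            by_cases h : (i:ι) ∈ Fj (j:κ) <;> simp [h]
        _ = ∑ i ∈ S.attach, ∑ j ∈ J.attach, (if (i:ι) ∈ Fj (j:κ) then c ↑j * v i else 0) :=
            Finset.sum_comm
        _ = ∑ i ∈ S.attach, (∑ j ∈ J.attach, if (i:ι) ∈ Fj (j:κ) then c ↑j else 0) * v i := by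
            apply Finset.sum_congr rfl; intro i _
            rw [Finset.sum_mul]
            apply Finset.sum_congr rfl; intro j _
            by_cases h : (i:ι) ∈ Fj (j:κ) <;> simp [h]
    rw [hcalc]
    apply Finset.sum_eq_zero
    intro i _
    have hz : (∑ j ∈ J.attach, if (i:ι) ∈ Fj (j:κ) then c j else 0) = 0 := by
      rw [Finset.sum_attach J (fun j => if (i:ι) ∈ Fj j then c j else 0)]
      rw [← Finset.sum_filter]
      obtain ⟨jA, jB, _, _, hjAA, hjBA, hne', hpair⟩ := hstruct ↑i i.2
      rw [hpair, Finset.sum_pair hne']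
      simp [hc, hjAA, hjBA]
    rw [hz, zero_mul]
  -- φ is surjective
  obtain ⟨i₀, hi₀⟩ := hS
  obtain ⟨jA, jB, hjAJ, _, hjAA, _, _, _⟩ := hstruct i₀ hi₀
  have hφs : Function.Surjective φ := by
    intro r
    refine ⟨fun j => if j = ⟨jA, hjAJ⟩ then r else 0, ?_⟩
    rw [hφapp, Finset.sum_eq_single (⟨jA, hjAJ⟩ : ↥J)]
    · simp [hc, hjAA]
    · intro b _ hb; simp [hb]
    · intro h; exact absurd (Finset.mem_attach _ _) h
  have h1 : Module.finrank ℝ ↥(LinearMap.range φ) = 1 := by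
    rw [LinearMap.range_eq_top.mpr hφs, finrank_top, Module.finrank_self]
  have h2 := LinearMap.finrank_range_add_finrank_ker φ
  rw [h1, hcod] at h2
  have h3 : Module.finrank ℝ ↥(LinearMap.range T) ≤ Module.finrank ℝ ↥(LinearMap.ker φ) :=
    Submodule.finrank_mono hrange
  have hc1 : 1 ≤ S.card := Finset.card_pos.mpr ⟨i₀, hi₀⟩
  omega

lemma round_aux {ι κ : Type*} [Fintype ι] [DecidableEq κ] [DecidableEq ι]
    (A B : Finset κ) (Fj : κ → Finset ι)
    (hA : (A : Set κ).Pairwise fun j j' => Disjoint (Fj j) (Fj j'))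
    (hB : (B : Set κ).Pairwise fun j j' => Disjoint (Fj j) (Fj j'))
    (w : ι → ℝ) (B₀ : ℝ) (n : ℕ) :
    ∀ y : ι → ℝ, (∀ i, 0 ≤ y i) → (∀ i, y i ≤ 1) →
      (∀ j ∈ A ∪ B, ∑ i ∈ Fj j, y i = 1) → (∑ i, w i * y i ≤ B₀) →
      ((Finset.univ.filter (fun i => y i ≠ 0 ∧ y i ≠ 1)).card ≤ n) →
      ∃ yhat : ι → ℝ, (∀ i, yhat i = 0 ∨ yhat i = 1) ∧ (∀ i, y i = 1 → yhat i = 1) ∧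
        (∀ j ∈ A ∪ B, ∑ i ∈ Fj j, yhat i = 1) ∧ ∑ i, w i * yhat i ≤ B₀ := by
  classical
  induction n with
  | zero =>
    intro y h0 h1 hc hb hcard
    refine ⟨y, ?_, fun i h => h, hc, hb⟩
    intro i
    by_contra h
    push_neg at h
    have hi : i ∈ Finset.univ.filter (fun i => y i ≠ 0 ∧ y i ≠ 1) := by
      simp [h.1, h.2]
    have := Finset.card_pos.mpr ⟨i, hi⟩
    omega
  | succ n ih =>
    intro y h0 h1 hc hb hcard
    by_cases hle : (Finset.univ.filter (fun i => y i ≠ 0 ∧ y i ≠ 1)).card ≤ n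
    · exact ih y h0 h1 hc hb hle
    · set S := Finset.univ.filter (fun i => y i ≠ 0 ∧ y i ≠ 1) with hSdef
      have hScard : S.card = n + 1 := by omega
      have hS : S.Nonempty := Finset.card_pos.mp (by omega)
      have hfrac : ∀ i ∈ S, 0 < y i ∧ y i < 1 := by
        intro i hi
        simp only [hSdef, Finset.mem_filter] at hi
        exact ⟨lt_of_le_of_ne (h0 i) (Ne.symm hi.2.1), lt_of_le_of_ne (h1 i) hi.2.2⟩
      have hint : ∀ i, i ∉ S → y i = 0 ∨ y i = 1 := by
        intro i hi
        simp only [hSdef, Finset.mem_filter, Finset.mem_univ, true_and] at hi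
        tauto
      -- each family meeting S meets it in at least 2 elements
      have hcard2 : ∀ j ∈ A ∪ B, (Fj j ∩ S).Nonempty → 2 ≤ (Fj j ∩ S).card := by
        intro j hj hne
        by_contra hlt
        push_neg at hlt
        have h1' : (Fj j ∩ S).card = 1 := le_antisymm (by omega) hne.card_pos
        obtain ⟨i₀, hi₀⟩ := Finset.card_eq_one.mp h1'
        have hi₀F : i₀ ∈ Fj j := by
          have : i₀ ∈ Fj j ∩ S := by rw [hi₀]; simp
          exact (Finset.mem_inter.mp this).1
        have hi₀S : i₀ ∈ S := by
          have : i₀ ∈ Fj j ∩ S := by rw [hi₀]; simp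
          exact (Finset.mem_inter.mp this).2
        have hothers : ∀ i ∈ (Fj j).erase i₀, y i = 0 ∨ y i = 1 := by
          intro i hi
          rcases Finset.mem_erase.mp hi with ⟨hne', hiF⟩
          apply hint
          intro hiS
          have : i ∈ Fj j ∩ S := Finset.mem_inter.mpr ⟨hiF, hiS⟩
          rw [hi₀] at this
          exact hne' (Finset.mem_singleton.mp this)
        have hsplit : y i₀ + ∑ i ∈ (Fj j).erase i₀, y i = 1 := by
          rw [Finset.add_sum_erase _ _ hi₀F]; exact hc j hj
        obtain ⟨hy0', hy1'⟩ := hfrac i₀ hi₀S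
        by_cases hex : ∃ i ∈ (Fj j).erase i₀, y i = 1
        · obtain ⟨i₁, hi₁, hyi₁⟩ := hex
          have : (1:ℝ) ≤ ∑ i ∈ (Fj j).erase i₀, y i := by
            rw [← hyi₁]
            exact Finset.single_le_sum (fun i _ => h0 i) hi₁
          linarith
        · push_neg at hex
          have : ∑ i ∈ (Fj j).erase i₀, y i = 0 := by
            apply Finset.sum_eq_zero
            intro i hi
            rcases hothers i hi with h | h
            · exact h
            · exact absurd h (hex i hi)
          linarith
      obtain ⟨d₀, hd₀supp, hd₀sum, hd₀ne⟩ :=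
        exists_nonzero_kernel A B Fj hA hB S hS hcard2
      -- choose sign so that the direction does not increase the cost
      obtain ⟨d, hdsupp, hdsum, hdne, hdw⟩ :
          ∃ d : ι → ℝ, (∀ i, i ∉ S → d i = 0) ∧ (∀ j ∈ A ∪ B, ∑ i ∈ Fj j, d i = 0) ∧
            d ≠ 0 ∧ ∑ i, w i * d i ≤ 0 := by
        rcases le_or_gt (∑ i, w i * d₀ i) 0 with h | h
        · exact ⟨d₀, hd₀supp, hd₀sum, hd₀ne, h⟩
        · refine ⟨-d₀, fun i hi => by simp [hd₀supp i hi], fun j hj => by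
            simpa using hd₀sum j hj, by simpa using hd₀ne, ?_⟩
          have : ∑ i, w i * (-d₀) i = -∑ i, w i * d₀ i := by
            simp [mul_neg]
          rw [this]; linarith
      -- step size
      set S' := S.filter (fun i => d i ≠ 0) with hS'def
      have hS' : S'.Nonempty := by
        obtain ⟨i, hi⟩ := Function.ne_iff.mp hdne
        have hi' : d i ≠ 0 := by simpa using hi
        have hiS : i ∈ S := by by_contra h; exact hi' (hdsupp i h)
        exact ⟨i, by simp [hS'def, hiS, hi']⟩
      set bnd : ι → ℝ := fun i => if 0 < d i then (1 - y i) / d i else y i / (-d i) with hbnd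
      set ε := S'.inf' hS' bnd with hε
      have hεpos : 0 < ε := by
        rw [hε, Finset.lt_inf'_iff]
        intro i hi
        simp only [hS'def, Finset.mem_filter] at hi
        obtain ⟨hy0', hy1'⟩ := hfrac i hi.1
        rcases lt_or_gt_of_ne hi.2 with hneg | hpos
        · simp only [hbnd, if_neg (not_lt.mpr hneg.le)]
          exact div_pos hy0' (by linarith)
        · simp only [hbnd, if_pos hpos]
          exact div_pos (by linarith) hpos
      have hεle : ∀ i ∈ S', ε ≤ bnd i := fun i hi => Finset.inf'_le _ hi
      set y' : ι → ℝ := fun i => y i + ε * d i with hy'def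
      -- bounds for y'
      have hy'0 : ∀ i, 0 ≤ y' i := by
        intro i
        by_cases hd : d i = 0
        · simp [hy'def, hd, h0 i]
        · have hiS : i ∈ S := by by_contra h; exact hd (hdsupp i h)
          have hiS' : i ∈ S' := by simp [hS'def, hiS, hd]
          rcases lt_or_gt_of_ne hd with hneg | hpos
          · have := hεle i hiS'
            simp only [hbnd, if_neg (not_lt.mpr hneg.le)] at this
            have h2 : ε * (-d i) ≤ y i / (-d i) * (-d i) :=
              mul_le_mul_of_nonneg_right this (by linarith)
            rw [div_mul_cancel₀ _ (by linarith : -d i ≠ 0)] at h2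
            simp only [hy'def]; nlinarith
          · have h2 : 0 ≤ ε * d i := le_of_lt (mul_pos hεpos hpos)
            simp only [hy'def]; linarith [h0 i]
      have hy'1 : ∀ i, y' i ≤ 1 := by
        intro i
        by_cases hd : d i = 0
        · simp [hy'def, hd, h1 i]
        · have hiS : i ∈ S := by by_contra h; exact hd (hdsupp i h)
          have hiS' : i ∈ S' := by simp [hS'def, hiS, hd]
          rcases lt_or_gt_of_ne hd with hneg | hpos
          · have h2 : ε * d i ≤ 0 := by nlinarith
            simp only [hy'def]; linarith [h1 i]
          · have := hεle i hiS'
            simp only [hbnd, if_pos hpos] at this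
            have h2 : ε * d i ≤ (1 - y i) / d i * d i :=
              mul_le_mul_of_nonneg_right this hpos.le
            rw [div_mul_cancel₀ _ (ne_of_gt hpos)] at h2
            simp only [hy'def]; linarith
      -- coverage and budget
      have hy'cov : ∀ j ∈ A ∪ B, ∑ i ∈ Fj j, y' i = 1 := by
        intro j hj
        simp only [hy'def]
        rw [Finset.sum_add_distrib, hc j hj, ← Finset.mul_sum, hdsum j hj]
        ring
      have hy'bud : ∑ i, w i * y' i ≤ B₀ := by
        have : ∑ i, w i * y' i = ∑ i, w i * y i + ε * ∑ i, w i * d i := by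
          simp only [hy'def]
          rw [Finset.mul_sum, ← Finset.sum_add_distrib]
          apply Finset.sum_congr rfl; intros; ring
        rw [this]
        nlinarith
      -- the coordinate attaining the minimum becomes integral
      obtain ⟨i₁, hi₁S', hi₁eq⟩ := Finset.exists_mem_eq_inf' hS' bnd
      have hi₁d : d i₁ ≠ 0 := (Finset.mem_filter.mp hi₁S').2
      have hi₁int : y' i₁ = 0 ∨ y' i₁ = 1 := by
        rcases lt_or_gt_of_ne hi₁d with hneg | hpos
        · left
          simp only [hy'def, hε, hi₁eq]
          simp only [hbnd, if_neg (not_lt.mpr hneg.le)]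
          rw [div_neg, neg_mul, div_mul_cancel₀ _ hi₁d]
          ring
        · right
          simp only [hy'def, hε, hi₁eq]
          simp only [hbnd, if_pos hpos]
          rw [div_mul_cancel₀ _ hi₁d]
          ring
      -- new fractional set is strictly smaller
      have hnewcard : (Finset.univ.filter (fun i => y' i ≠ 0 ∧ y' i ≠ 1)).card ≤ n := by
        have hsub : Finset.univ.filter (fun i => y' i ≠ 0 ∧ y' i ≠ 1) ⊆ S.erase i₁ := by
          intro i hi
          simp only [Finset.mem_filter, Finset.mem_univ, true_and] at hi
          have hiS : i ∈ S := by
            by_cases hd : d i = 0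
            · apply Finset.mem_filter.mpr
              refine ⟨Finset.mem_univ i, ?_⟩
              simpa [hy'def, hd] using hi
            · by_contra h; exact hd (hdsupp i h)
          refine Finset.mem_erase.mpr ⟨?_, hiS⟩
          rintro rfl
          rcases hi₁int with h | h
          · exact hi.1 h
          · exact hi.2 h
        calc _ ≤ (S.erase i₁).card := Finset.card_le_card hsub
          _ = S.card - 1 := Finset.card_erase_of_mem (Finset.mem_filter.mp hi₁S').1
          _ ≤ n := by omega
      obtain ⟨yhat, hint', hkeep', hcov', hbud'⟩ := ih y' hy'0 hy'1 hy'cov hy'bud hnewcard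
      refine ⟨yhat, hint', ?_, hcov', hbud'⟩
      intro i hyi
      apply hkeep'
      have hiS : i ∉ S := by simp [hSdef, hyi]
      simp [hy'def, hdsupp i hiS, hyi]



/-- As in the previous rounding statement, but additionally the integral point
can be chosen to keep open every facility with ȳ_i = 1. -/
theorem exists_integral_rounding_keeping_ones {ι κ : Type*} [Fintype ι] [DecidableEq κ]
    (A B : Finset κ) (Fj : κ → Finset ι)
    (hA : (A : Set κ).Pairwise fun j j' => Disjoint (Fj j) (Fj j'))
    (hB : (B : Set κ).Pairwise fun j j' => Disjoint (Fj j) (Fj j'))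
    (w : ι → ℝ) (hw : ∀ i, 0 ≤ w i) (B₀ : ℝ) (hB₀ : 0 ≤ B₀)
    (ybar : ι → ℝ) (hy0 : ∀ i, 0 ≤ ybar i) (hy1 : ∀ i, ybar i ≤ 1)
    (hcov : ∀ j ∈ A ∪ B, ∑ i ∈ Fj j, ybar i = 1)
    (hbud : ∑ i, w i * ybar i ≤ B₀) :
    ∃ yhat : ι → ℝ, (∀ i, yhat i = 0 ∨ yhat i = 1) ∧
      (∀ i, ybar i = 1 → yhat i = 1) ∧
      (∀ j ∈ A ∪ B, ∑ i ∈ Fj j, yhat i = 1) ∧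
      ∑ i, w i * yhat i ≤ B₀ := by
  classical
  exact round_aux A B Fj hA hB w B₀ (Fintype.card ι) ybar hy0 hy1 hcov hbud
    (by simpa using Finset.card_filter_le Finset.univ _)
end
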